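/- Let R = ℂ[x₀,…,x₄] and let l₀, l₁, l₂, l₃, l₄ be ℂ-linearly independent linear forms in R. Suppose Q₁, …, Q₆, F ∈ R satisfy Q₁·l₂ − Q₂·l₁ + Q₃·l₀ = F and −Q₂·l₄ + Q₃·l₃ + Q₄·l₂ − Q₅·l₁ + Q₆·l₀ = 0. Then F belongs to the ideal (l₂, l₀l₄ − l₁l₃, l₁², l₀l₁, l₀²) of R. -/

import Mathlib

open MvPolynomial

namespace Stmt6Aux

noncomputable section

abbrev P5 := MvPolynomial (Fin 5) ℂ

lemma degree_one_single (d : Fin 5 →₀ ℕ) (h : d.degree = 1) :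
    ∃ j, d = Finsupp.single j 1 := by
  classical
  have hne : d.support.Nonempty := by
    rw [Finset.nonempty_iff_ne_empty]
    intro hs
    rw [Finsupp.degree_apply, hs] at h
    simp at h
  obtain ⟨i, hi⟩ := hne
  have hdi : d i ≠ 0 := Finsupp.mem_support_iff.mp hi
  have hsum : d i + ∑ j ∈ d.support.erase i, d j = 1 := by
    rw [Finsupp.degree_apply] at h
    rw [Finset.add_sum_erase _ _ hi]
    exact h
  set s := ∑ j ∈ d.support.erase i, d j with hs
  have h1 : d i = 1 := by omega
  have h2 : s = 0 := by omega
  refine ⟨i, ?_⟩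
  ext k
  rcases eq_or_ne k i with rfl | hk
  · simp [h1]
  · have hk0 : d k = 0 := by
      by_contra hk0
      have hks : k ∈ d.support.erase i := by
        simp [Finsupp.mem_support_iff, hk0, hk]
      exact hk0 (Finset.sum_eq_zero_iff.mp h2 k hks)
    rw [hk0, Finsupp.single_eq_of_ne' (Ne.symm hk)]

lemma degree_single (j : Fin 5) : (Finsupp.single j 1 : Fin 5 →₀ ℕ).degree = 1 := by
  rw [Finsupp.degree_apply, Finsupp.support_single_ne_zero j one_ne_zero]
  simp

lemma rep {p : P5} (hp : p.IsHomogeneous 1) :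
    p = ∑ j, C (coeff (Finsupp.single j 1) p) * X j := by
  apply MvPolynomial.ext
  intro d
  rw [MvPolynomial.coeff_sum]
  by_cases hd : d.degree = 1
  · obtain ⟨j, rfl⟩ := degree_one_single d hd
    rw [Finset.sum_eq_single j]
    · simp [coeff_C_mul, coeff_X']
    · intro k _ hkj
      simp only [coeff_C_mul, coeff_X']
      rw [if_neg (by simpa [Finsupp.single_left_inj (one_ne_zero (α := ℕ))] using hkj)]
      ring
    · simp
  · rw [hp.coeff_eq_zero hd]
    symm
    apply Finset.sum_eq_zero
    intro j _
    have hne : Finsupp.single j 1 ≠ d := fun hh => hd (hh ▸ degree_single j)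
    simp [coeff_C_mul, coeff_X', hne]

/-- Retraction killing the variables in `s`. -/
def ret (s : Set (Fin 5)) [DecidablePred (· ∈ s)] : P5 →ₐ[ℂ] P5 :=
  aeval (fun i => if i ∈ s then 0 else X i)

lemma sub_ret_mem (s : Set (Fin 5)) [DecidablePred (· ∈ s)] (p : P5) :
    p - ret s p ∈ Ideal.span (X '' s : Set P5) := by
  induction p using MvPolynomial.induction_on with
  | C a => simp [ret]
  | add p q hp hq =>
    have := Ideal.add_mem _ hp hq
    rw [map_add]
    convert this using 1
    ring
  | mul_X p n hp =>
    rw [map_mul]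
    by_cases hn : n ∈ s
    · have : ret s (X n : P5) = 0 := by simp [ret, hn]
      rw [this, mul_zero, sub_zero]
      exact Ideal.mul_mem_left _ _ (Ideal.subset_span ⟨n, hn, rfl⟩)
    · have : ret s (X n : P5) = X n := by simp [ret, hn]
      rw [this]
      have : p * X n - ret s p * X n = (p - ret s p) * X n := by ring
      rw [this]
      exact Ideal.mul_mem_right _ _ hp

lemma concrete (Q₁ Q₂ Q₃ Q₄ Q₅ Q₆ F : P5)
    (e₁ : Q₁ * X 2 - Q₂ * X 1 + Q₃ * X 0 = F)
    (e₂ : -Q₂ * X 4 + Q₃ * X 3 + Q₄ * X 2 - Q₅ * X 1 + Q₆ * X 0 = 0) :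
    F ∈ Ideal.span {X 2, X 0 * X 4 - X 1 * X 3, X 1 ^ 2, X 0 * X 1, (X 0 : P5) ^ 2} := by
  classical
  set I : Ideal P5 :=
    Ideal.span {X 2, X 0 * X 4 - X 1 * X 3, X 1 ^ 2, X 0 * X 1, (X 0 : P5) ^ 2} with hI
  set s₁ : Set (Fin 5) := {i | i = 0 ∨ i = 1 ∨ i = 2} with hs₁
  set s₂ : Set (Fin 5) := {i | i = 3} with hs₂
  have hs₁img : (X '' s₁ : Set P5) = {X 0, X 1, X 2} := by
    ext q
    constructor
    · rintro ⟨i, (rfl | rfl | rfl), rfl⟩ <;> simp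
    · rintro (rfl | rfl | rfl)
      · exact ⟨0, Or.inl rfl, rfl⟩
      · exact ⟨1, Or.inr (Or.inl rfl), rfl⟩
      · exact ⟨2, Or.inr (Or.inr rfl), rfl⟩
  have hs₂img : (X '' s₂ : Set P5) = {X 3} := by
    ext q
    constructor
    · rintro ⟨i, rfl, rfl⟩; rfl
    · rintro rfl; exact ⟨3, rfl, rfl⟩
  set π := ret s₁ with hπ
  set ρ := ret s₂ with hρ
  have hπ0 : π (X 0) = 0 := by simp [hπ, ret, hs₁]
  have hπ1 : π (X 1) = 0 := by simp [hπ, ret, hs₁]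
  have hπ2 : π (X 2) = 0 := by simp [hπ, ret, hs₁]
  have hπ3 : π (X 3) = X 3 := by simp [hπ, ret, hs₁]
  have hπ4 : π (X 4) = X 4 := by simp [hπ, ret, hs₁]
  have hρ3 : ρ (X 3) = 0 := by simp [hρ, ret, hs₂]
  have hρ4 : ρ (X 4) = X 4 := by simp [hρ, ret, hs₂]
  -- apply π to e₂
  have key : π Q₂ * X 4 = π Q₃ * X 3 := by
    have := congrArg π e₂
    simp only [map_add, map_sub, map_mul, map_neg, map_zero, hπ0, hπ1, hπ2, hπ3, hπ4,
      mul_zero] at this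
    linear_combination -this
  -- apply ρ to key
  have hρQ₂ : ρ (π Q₂) = 0 := by
    have := congrArg ρ key
    simp only [map_mul, hρ3, hρ4, mul_zero] at this
    exact mul_right_cancel₀ (X_ne_zero 4) (by rw [this, zero_mul])
  have hmem : π Q₂ ∈ Ideal.span ({X 3} : Set P5) := by
    have h := sub_ret_mem s₂ (π Q₂)
    rw [hs₂img] at h
    simpa [← hρ, hρQ₂] using h
  obtain ⟨G, hG⟩ := Ideal.mem_span_singleton'.mp hmem
  -- hG : G * X 3 = π Q₂
  have hQ₃ : π Q₃ = G * X 4 := by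
    have : G * X 3 * X 4 = π Q₃ * X 3 := by rw [hG]; exact key
    apply mul_right_cancel₀ (X_ne_zero (R := ℂ) 3)
    linear_combination -this
  -- decompositions
  have ha : Q₂ - π Q₂ ∈ Ideal.span ({X 0, X 1, X 2} : Set P5) := by
    have h := sub_ret_mem s₁ Q₂
    rwa [hs₁img] at h
  have hb : Q₃ - π Q₃ ∈ Ideal.span ({X 0, X 1, X 2} : Set P5) := by
    have h := sub_ret_mem s₁ Q₃
    rwa [hs₁img] at h
  -- J-elements times X 0 or X 1 are in I
  have hmul : ∀ k : Fin 5, k = 0 ∨ k = 1 →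
      ∀ z ∈ Ideal.span ({X 0, X 1, X 2} : Set P5), z * X k ∈ I := by
    rintro k hk z hz
    induction hz using Submodule.span_induction with
    | mem x hx =>
      rcases hx with rfl | rfl | rfl <;> rcases hk with rfl | rfl
      · exact Ideal.subset_span (by simp [pow_two])
      · exact Ideal.subset_span (by simp)
      · rw [mul_comm]; exact Ideal.subset_span (by simp)
      · exact Ideal.subset_span (by simp [pow_two])
      · exact Ideal.mul_mem_right _ _ (Ideal.subset_span (by simp))
      · exact Ideal.mul_mem_right _ _ (Ideal.subset_span (by simp))
    | zero => simp
    | add x y _ _ hx hy => rw [add_mul]; exact Ideal.add_mem _ hx hy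
    | smul c x _ hx => rw [smul_mul_assoc]; exact Submodule.smul_mem _ _ hx
  have hgen₂ : (X 2 : P5) ∈ I := Ideal.subset_span (by simp)
  have hgenq : (X 0 * X 4 - X 1 * X 3 : P5) ∈ I := Ideal.subset_span (by simp)
  have hF : F = Q₁ * X 2 + G * (X 0 * X 4 - X 1 * X 3)
      - (Q₂ - π Q₂) * X 1 + (Q₃ - π Q₃) * X 0 := by
    linear_combination -e₁ + X 1 * hG + X 0 * hQ₃
  rw [hF]
  refine Ideal.add_mem _ (Ideal.sub_mem _ (Ideal.add_mem _ ?_ ?_) ?_) ?_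
  · exact Ideal.mul_mem_left _ _ hgen₂
  · exact Ideal.mul_mem_left _ _ hgenq
  · exact hmul 1 (Or.inr rfl) _ ha
  · exact hmul 0 (Or.inl rfl) _ hb

lemma collapse (A B : Matrix (Fin 5) (Fin 5) ℂ) (h : A * B = 1) (i : Fin 5) :
    ∑ j, C (A i j) * (∑ k, C (B j k) * X k) = (X i : P5) := by
  calc ∑ j, C (A i j) * (∑ k, C (B j k) * X k)
      = ∑ j, ∑ k, C (A i j * B j k) * X k := by
        simp [Finset.mul_sum, C_mul, mul_assoc]
    _ = ∑ k, ∑ j, C (A i j * B j k) * X k := Finset.sum_comm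
    _ = ∑ k, C ((A * B) i k) * X k := by
        refine Finset.sum_congr rfl fun k _ => ?_
        rw [Matrix.mul_apply, ← Finset.sum_mul, ← map_sum]
    _ = X i := by
        rw [h]
        simp [Matrix.one_apply, apply_ite (C : ℂ → P5), ite_mul]

/-- The linear map sending a coefficient vector to the associated linear form. -/
def B : (Fin 5 → ℂ) →ₗ[ℂ] P5 where
  toFun v := ∑ j, C (v j) * X j
  map_add' u v := by simp [map_add, add_mul, Finset.sum_add_distrib]
  map_smul' c v := by
    simp [smul_eq_C_mul, Finset.smul_sum, C_mul, mul_assoc]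

end

end Stmt6Aux

open Stmt6Aux in
theorem stmt_6 (l₀ l₁ l₂ l₃ l₄ : MvPolynomial (Fin 5) ℂ)
    (h₀ : l₀.IsHomogeneous 1) (h₁ : l₁.IsHomogeneous 1)
    (h₂ : l₂.IsHomogeneous 1) (h₃ : l₃.IsHomogeneous 1) (h₄ : l₄.IsHomogeneous 1)
    (hind : LinearIndependent ℂ ![l₀, l₁, l₂, l₃, l₄])
    (Q₁ Q₂ Q₃ Q₄ Q₅ Q₆ F : MvPolynomial (Fin 5) ℂ)
    (e₁ : Q₁ * l₂ - Q₂ * l₁ + Q₃ * l₀ = F)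
    (e₂ : -Q₂ * l₄ + Q₃ * l₃ + Q₄ * l₂ - Q₅ * l₁ + Q₆ * l₀ = 0) :
    F ∈ Ideal.span {l₂, l₀ * l₄ - l₁ * l₃, l₁ ^ 2, l₀ * l₁, l₀ ^ 2} := by
  classical
  set l : Fin 5 → P5 := ![l₀, l₁, l₂, l₃, l₄] with hl
  have hl0 : l 0 = l₀ := rfl
  have hl1 : l 1 = l₁ := rfl
  have hl2 : l 2 = l₂ := rfl
  have hl3 : l 3 = l₃ := rfl
  have hl4 : l 4 = l₄ := rfl
  have hhom : ∀ i, (l i).IsHomogeneous 1 := by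
    intro i; fin_cases i <;> assumption
  set M : Matrix (Fin 5) (Fin 5) ℂ :=
    Matrix.of fun i j => coeff (Finsupp.single j 1) (l i) with hM
  have hrep : ∀ i, l i = ∑ j, C (M i j) * X j := fun i => rep (hhom i)
  have hBM : ∀ i, B (M i) = l i := by
    intro i
    rw [hrep i]; rfl
  have hrows : LinearIndependent ℂ (fun i => M i) := by
    apply LinearIndependent.of_comp B
    have : (⇑B ∘ fun i => M i) = l := funext fun i => hBM i
    rw [this, hl]
    exact hind
  have hMunit : IsUnit M := Matrix.linearIndependent_rows_iff_isUnit.mp hrows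
  have hdet : IsUnit M.det := (Matrix.isUnit_iff_isUnit_det M).mp hMunit
  set N : Matrix (Fin 5) (Fin 5) ℂ := M⁻¹ with hN
  have hMN : M * N = 1 := Matrix.mul_nonsing_inv M hdet
  have hNM : N * M = 1 := Matrix.nonsing_inv_mul M hdet
  set τ : P5 →ₐ[ℂ] P5 := aeval (fun i => ∑ j, C (N i j) * X j) with hτ
  set σ' : P5 →ₐ[ℂ] P5 := aeval l with hσ
  have hτX : ∀ i, τ (X i) = ∑ j, C (N i j) * X j := fun i => aeval_X _ i
  have hσX : ∀ i, σ' (X i) = l i := fun i => aeval_X _ i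
  have hτC : ∀ a : ℂ, τ (C a) = C a := fun a => by
    rw [hτ, aeval_C, algebraMap_eq]
  have hσC : ∀ a : ℂ, σ' (C a) = C a := fun a => by
    rw [hσ, aeval_C, algebraMap_eq]
  have hτl : ∀ i, τ (l i) = X i := by
    intro i
    rw [hrep i, map_sum]
    simp only [map_mul, hτC, hτX]
    exact collapse M N hMN i
  have hστ : ∀ p : P5, σ' (τ p) = p := by
    have hcomp : σ'.comp τ = AlgHom.id ℂ P5 := by
      apply MvPolynomial.algHom_ext
      intro i
      rw [AlgHom.comp_apply, AlgHom.id_apply, hτX i, map_sum]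
      simp only [map_mul, hσC, hσX]
      calc ∑ j, C (N i j) * l j
          = ∑ j, C (N i j) * ∑ k, C (M j k) * X k :=
            Finset.sum_congr rfl fun j _ => by rw [← hrep j]
        _ = X i := collapse N M hNM i
    exact fun p => DFunLike.congr_fun hcomp p
  have e₁' : τ Q₁ * X 2 - τ Q₂ * X 1 + τ Q₃ * X 0 = τ F := by
    have := congrArg τ e₁
    simp only [map_add, map_sub, map_mul] at this
    rw [← hl0, ← hl1, ← hl2, hτl 0, hτl 1, hτl 2] at this
    exact this
  have e₂' : -τ Q₂ * X 4 + τ Q₃ * X 3 + τ Q₄ * X 2 - τ Q₅ * X 1 + τ Q₆ * X 0 = 0 := by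
    have := congrArg τ e₂
    simp only [map_add, map_sub, map_mul, map_neg, map_zero] at this
    rw [← hl0, ← hl1, ← hl2, ← hl3, ← hl4, hτl 0, hτl 1, hτl 2, hτl 3, hτl 4] at this
    linear_combination this
  have hτF := concrete (τ Q₁) (τ Q₂) (τ Q₃) (τ Q₄) (τ Q₅) (τ Q₆) (τ F) e₁' e₂'
  have hmap : σ' (τ F) ∈
      Ideal.map σ' (Ideal.span {X 2, X 0 * X 4 - X 1 * X 3, X 1 ^ 2, X 0 * X 1,
        (X 0 : P5) ^ 2}) := Ideal.mem_map_of_mem _ hτF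
  rw [Ideal.map_span, hστ F] at hmap
  refine Ideal.span_le.mpr ?_ hmap
  rintro _ ⟨x, hx, rfl⟩
  simp only [Set.mem_insert_iff, Set.mem_singleton_iff] at hx
  rcases hx with rfl | rfl | rfl | rfl | rfl <;>
    simp only [map_sub, map_mul, map_pow, hσX, hl0, hl1, hl2, hl3, hl4] <;>
    exact Ideal.subset_span (by simp)
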